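/- Let ρ be the 4-qubit state ρ = (1/16) Σ_{i,j=0}^{3} R_{ij} σᵢ ⊗ σⱼ ⊗ σᵢ ⊗ σⱼ with R = (1/9)·[[9,3,3,3],[1,−1,3,−1],[1,−1,3,−1],[1,−1,3,−1]], and let τ_W(p) = p|Ψ⁻⟩⟨Ψ⁻| + (1−p)1₄/4 be the two-qubit Werner state. Then tr[ρ (τ_W(p)ᵀ ⊗ H_{π/4})] = (3 − √2 − (1+√2)p)/12, where τ_W(p)ᵀ acts on qubits 1 and 3 of ρ and H_{π/4} acts on qubits 2 and 4. -/

import Mathlib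

open Matrix Kronecker Real ComplexOrder

noncomputable section

def σx : Matrix (Fin 2) (Fin 2) ℂ := !![0, 1; 1, 0]
def σy : Matrix (Fin 2) (Fin 2) ℂ := !![0, -Complex.I; Complex.I, 0]
def σz : Matrix (Fin 2) (Fin 2) ℂ := !![1, 0; 0, -1]

def pauli : Fin 4 → Matrix (Fin 2) (Fin 2) ℂ := ![1, σx, σy, σz]

def R : Matrix (Fin 4) (Fin 4) ℝ :=
  (9 : ℝ)⁻¹ • !![9, 3, 3, 3; 1, -1, 3, -1; 1, -1, 3, -1; 1, -1, 3, -1]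

/-- The 4-qubit ancillary state `ρ = (1/16) Σ_{i,j} R_{ij} σᵢ⊗σⱼ⊗σᵢ⊗σⱼ`. -/
def ancilla :
    Matrix ((Fin 2 × Fin 2) × (Fin 2 × Fin 2)) ((Fin 2 × Fin 2) × (Fin 2 × Fin 2)) ℂ :=
  (16 : ℂ)⁻¹ • ∑ i : Fin 4, ∑ j : Fin 4,
    (R i j : ℂ) • ((pauli i ⊗ₖ pauli j) ⊗ₖ (pauli i ⊗ₖ pauli j))

/-- Singlet `|Ψ⁻⟩ = (|01⟩ − |10⟩)/√2`. -/
def PsiM : Fin 2 × Fin 2 → ℂ :=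
  fun p => (Real.sqrt 2 : ℂ)⁻¹ *
    (if p = (0, 1) then 1 else if p = (1, 0) then -1 else 0)

/-- Two-qubit Werner state `τ_W(p) = p |Ψ⁻⟩⟨Ψ⁻| + (1−p) 1₄/4`. -/
def wernerState (p : ℝ) : Matrix (Fin 2 × Fin 2) (Fin 2 × Fin 2) ℂ :=
  (p : ℂ) • vecMulVec PsiM (star PsiM) + (((1 - p) / 4 : ℝ) : ℂ) • 1

/-- `H_{π/4} = 1₄ − (1/√2)(σx⊗σx) − (1/√2)(σz⊗σz)`. -/
def Hpi4 : Matrix (Fin 2 × Fin 2) (Fin 2 × Fin 2) ℂ :=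
  1 - (Real.cos (π / 4) : ℂ) • (σx ⊗ₖ σx) - (Real.sin (π / 4) : ℂ) • (σz ⊗ₖ σz)

/-- The observable `τ_W(p)ᵀ ⊗ H_{π/4}`, with `τ_W(p)ᵀ` acting on qubits 1 and 3
of `ρ` (the `σᵢ` factors) and `H_{π/4}` acting on qubits 2 and 4 (the `σⱼ` factors). -/
def obs (p : ℝ) :
    Matrix ((Fin 2 × Fin 2) × (Fin 2 × Fin 2)) ((Fin 2 × Fin 2) × (Fin 2 × Fin 2)) ℂ :=
  fun q r =>
    (wernerState p)ᵀ (q.1.1, q.2.1) (r.1.1, r.2.1) * Hpi4 (q.1.2, q.2.2) (r.1.2, r.2.2)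


lemma factor (A B : Matrix (Fin 2) (Fin 2) ℂ)
    (M N : Matrix (Fin 2 × Fin 2) (Fin 2 × Fin 2) ℂ) :
    (((A ⊗ₖ B) ⊗ₖ (A ⊗ₖ B)) * Matrix.of
      (fun q r => M (q.1.1, q.2.1) (r.1.1, r.2.1) * N (q.1.2, q.2.2) (r.1.2, r.2.2)
        : ((Fin 2 × Fin 2) × (Fin 2 × Fin 2)) → ((Fin 2 × Fin 2) × (Fin 2 × Fin 2)) → ℂ)).trace
    = ((A ⊗ₖ A) * M).trace * ((B ⊗ₖ B) * N).trace := by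
  simp only [Matrix.trace, Matrix.diag, Matrix.mul_apply, Matrix.kroneckerMap_apply,
    Matrix.of_apply, Fintype.sum_prod_type, Fin.sum_univ_two]
  ring

lemma h2c : ((Real.sqrt 2 : ℝ) : ℂ)^2 = 2 := by
  rw [← Complex.ofReal_pow, Real.sq_sqrt] <;> norm_num

lemma h4c : ((Real.sqrt 2 : ℝ) : ℂ)^4 = 4 := by
  have : ((Real.sqrt 2 : ℝ) : ℂ)^4 = (((Real.sqrt 2 : ℝ) : ℂ)^2)^2 := by ring
  rw [this, h2c]; norm_num

lemma hne : ((Real.sqrt 2 : ℝ) : ℂ) ≠ 0 := by simp [Real.sqrt_eq_zero']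

lemma tA0 (p : ℝ) : ((pauli 0 ⊗ₖ pauli 0) * (wernerState p)ᵀ).trace = 1 := by
  have := hne
  simp [Matrix.trace, Matrix.diag, Matrix.mul_apply, Fintype.sum_prod_type,
    Fin.sum_univ_two, wernerState, PsiM, pauli, σx, σy, σz, Matrix.one_apply,
    Matrix.vecMulVec_apply]
  field_simp
  ring_nf
  simp [h2c, h4c]
  ring

lemma tA1 (p : ℝ) : ((pauli 1 ⊗ₖ pauli 1) * (wernerState p)ᵀ).trace = -p := by
  have := hne
  simp [Matrix.trace, Matrix.diag, Matrix.mul_apply, Fintype.sum_prod_type,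
    Fin.sum_univ_two, wernerState, PsiM, pauli, σx, σy, σz, Matrix.one_apply,
    Matrix.vecMulVec_apply]
  field_simp
  ring_nf
  simp [h2c, h4c]

lemma tA2 (p : ℝ) : ((pauli 2 ⊗ₖ pauli 2) * (wernerState p)ᵀ).trace = -p := by
  have := hne
  simp [Matrix.trace, Matrix.diag, Matrix.mul_apply, Fintype.sum_prod_type,
    Fin.sum_univ_two, wernerState, PsiM, pauli, σx, σy, σz, Matrix.one_apply,
    Matrix.vecMulVec_apply]
  field_simp
  ring_nf
  simp [h2c, h4c, Complex.I_sq]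

lemma tA3 (p : ℝ) : ((pauli 3 ⊗ₖ pauli 3) * (wernerState p)ᵀ).trace = -p := by
  have := hne
  simp [Matrix.trace, Matrix.diag, Matrix.mul_apply, Fintype.sum_prod_type,
    Fin.sum_univ_two, wernerState, PsiM, pauli, σx, σy, σz, Matrix.one_apply,
    Matrix.vecMulVec_apply]
  field_simp
  ring_nf
  simp [h2c, h4c]

lemma tB0 : ((pauli 0 ⊗ₖ pauli 0) * Hpi4).trace = 4 := by
  simp [Matrix.trace, Matrix.diag, Matrix.mul_apply, Fintype.sum_prod_type,
    Fin.sum_univ_two, Hpi4, pauli, σx, σy, σz, Matrix.one_apply]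

lemma tB1 : ((pauli 1 ⊗ₖ pauli 1) * Hpi4).trace = -2 * ((Real.sqrt 2:ℝ):ℂ) := by
  simp [Matrix.trace, Matrix.diag, Matrix.mul_apply, Fintype.sum_prod_type,
    Fin.sum_univ_two, Hpi4, pauli, σx, σy, σz, Matrix.one_apply,
    Real.cos_pi_div_four, Real.sin_pi_div_four]
  ring

lemma tB2 : ((pauli 2 ⊗ₖ pauli 2) * Hpi4).trace = 0 := by
  simp [Matrix.trace, Matrix.diag, Matrix.mul_apply, Fintype.sum_prod_type,
    Fin.sum_univ_two, Hpi4, pauli, σx, σy, σz, Matrix.one_apply]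

lemma tB3 : ((pauli 3 ⊗ₖ pauli 3) * Hpi4).trace = -2 * ((Real.sqrt 2:ℝ):ℂ) := by
  simp [Matrix.trace, Matrix.diag, Matrix.mul_apply, Fintype.sum_prod_type,
    Fin.sum_univ_two, Hpi4, pauli, σx, σy, σz, Matrix.one_apply,
    Real.cos_pi_div_four, Real.sin_pi_div_four]
  ring

/-- `tr[ρ (τ_W(p)ᵀ ⊗ H_{π/4})] = (3 − √2 − (1+√2)p)/12`. -/
theorem trace_ancilla_werner (p : ℝ) :
    (ancilla * obs p).trace
      = (((3 - Real.sqrt 2 - (1 + Real.sqrt 2) * p) / 12 : ℝ) : ℂ) := by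
  have hobs : obs p = Matrix.of (fun q r =>
      (wernerState p)ᵀ (q.1.1, q.2.1) (r.1.1, r.2.1) * Hpi4 (q.1.2, q.2.2) (r.1.2, r.2.2)) := rfl
  have key : (ancilla * obs p).trace
      = (16 : ℂ)⁻¹ * ∑ i : Fin 4, ∑ j : Fin 4, (R i j : ℂ) *
        (((pauli i ⊗ₖ pauli i) * (wernerState p)ᵀ).trace *
          ((pauli j ⊗ₖ pauli j) * Hpi4).trace) := by
    rw [ancilla, hobs, Matrix.smul_mul, Matrix.trace_smul]
    rw [Finset.sum_mul, smul_eq_mul]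
    congr 1
    rw [Matrix.trace_sum]
    refine Finset.sum_congr rfl fun i _ => ?_
    rw [Finset.sum_mul, Matrix.trace_sum]
    refine Finset.sum_congr rfl fun j _ => ?_
    rw [Matrix.smul_mul, Matrix.trace_smul, smul_eq_mul, factor]
  rw [key]
  simp only [Fin.sum_univ_four, tA0, tA1, tA2, tA3, tB0, tB1, tB2, tB3, R]
  norm_num [Matrix.smul_apply, Matrix.cons_val_zero, Matrix.cons_val_one, Matrix.head_cons,
    Matrix.cons_val_succ, Matrix.vecHead, Matrix.vecTail, Matrix.cons_val_two, Matrix.cons_val_three]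
  ring
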